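/- If G is a group whose center Z(G) has finite index in G, then the commutator subgroup [G,G] is finite. (Schur's theorem.) -/

import Mathlib

open scoped commutatorElement

lemma commutator_eq_of_center {G : Type*} [Group G] (a b z w : G)
    (hz : z ∈ Subgroup.center G) (hw : w ∈ Subgroup.center G) :
    ⁅a * z, b * w⁆ = ⁅a, b⁆ := by
  rw [Subgroup.mem_center_iff] at hz hw
  simp only [commutatorElement_def, mul_inv_rev]
  calc a * z * (b * w) * (z⁻¹ * a⁻¹) * (w⁻¹ * b⁻¹)
      = a * (z * b) * w * z⁻¹ * a⁻¹ * w⁻¹ * b⁻¹ := by group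
    _ = a * (b * z) * w * z⁻¹ * a⁻¹ * w⁻¹ * b⁻¹ := by rw [← hz b]
    _ = a * b * (z * w * z⁻¹) * a⁻¹ * w⁻¹ * b⁻¹ := by group
    _ = a * b * (w * z * z⁻¹) * a⁻¹ * w⁻¹ * b⁻¹ := by rw [← hz w]
    _ = a * b * (w * a⁻¹) * w⁻¹ * b⁻¹ := by group
    _ = a * b * (a⁻¹ * w) * w⁻¹ * b⁻¹ := by rw [← hw a⁻¹]
    _ = a * b * a⁻¹ * b⁻¹ := by group

/-- Schur's theorem: if the center of `G` has finite index,
then the commutator subgroup of `G` is finite. -/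
theorem schur_commutator_finite (G : Type*) [Group G]
    (h : (Subgroup.center G).FiniteIndex) :
    Finite (commutator G) := by
  haveI : Finite (G ⧸ Subgroup.center G) :=
    Subgroup.finite_quotient_of_finiteIndex
  haveI : Finite (commutatorSet G) := by
    have hsurj : ∀ c : commutatorSet G, ∃ p : (G ⧸ Subgroup.center G) × (G ⧸ Subgroup.center G),
        ∀ a b : G, p.1 = (a : G ⧸ Subgroup.center G) → p.2 = (b : G ⧸ Subgroup.center G) →
          (c : G) = ⁅a, b⁆ := by
      rintro ⟨c, a, b, rfl⟩
      refine ⟨((a : G ⧸ Subgroup.center G), (b : G ⧸ Subgroup.center G)), fun a' b' ha hb => ?_⟩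
      rw [QuotientGroup.eq] at ha hb
      have ha' : a' = a * (a⁻¹ * a') := by group
      have hb' : b' = b * (b⁻¹ * b') := by group
      rw [ha', hb', commutator_eq_of_center a b _ _ ha hb]
    choose f hf using hsurj
    apply Finite.of_injective f
    intro c d hcd
    obtain ⟨a, ha⟩ := QuotientGroup.mk_surjective (f c).1
    obtain ⟨b, hb⟩ := QuotientGroup.mk_surjective (f c).2
    have h1 := hf c a b ha.symm hb.symm
    have h2 := hf d a b (by rw [← hcd, ha]) (by rw [← hcd, hb])
    exact Subtype.ext (h1.trans h2.symm)
  infer_instance
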